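/- Fix integers e > r ≥ 2. The map sending a tuple (g₁,...,g_j) of nonnegative integers with g₁ + ⋯ + g_j = e − j (with 1 ≤ j ≤ r) to the difference vector of beta numbers of the e-core partition whose e-abacus has j flush nonempty runners at positions s₁ = 0 < s₂ < ⋯ < s_j (where s_{m+1} − s_m = g_m + 1) carrying μ₁,...,μ_j beads respectively, is injective, for any fixed composition μ = (μ₁,...,μ_j) of r. -/

import Mathlib

/-- Given a composition μ of r with j parts and gap variables g (summing to
e−j), the corresponding flush e-abacus has nonempty runners at positions
s m = ∑_{t<m} (g t + 1), with μ m beads (rows 0,…,μ m − 1) on runner s m.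
This is the difference vector of the resulting sorted-decreasing beta numbers. -/
def coreDiffVec (e j : ℕ) (μ g : ℕ → ℕ) : List ℕ :=
  let s : ℕ → ℕ := fun m => ∑ t ∈ Finset.range m, (g t + 1)
  let l : List ℕ :=
    ((((Finset.range j).val.bind
      (fun m => (Multiset.range (μ m)).map (fun row => row * e + s m))).sort
        (· ≤ ·))).reverse
  l.zipWith (· - ·) l.tail

private def sPos (g : ℕ → ℕ) (m : ℕ) : ℕ := ∑ t ∈ Finset.range m, (g t + 1)

private def betaM (e j : ℕ) (μ g : ℕ → ℕ) : Multiset ℕ :=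
  (Finset.range j).val.bind
    (fun m => (Multiset.range (μ m)).map (fun row => row * e + sPos g m))

private lemma coreDiffVec_eq (e j : ℕ) (μ g : ℕ → ℕ) :
    coreDiffVec e j μ g =
      (((betaM e j μ g).sort (· ≤ ·)).reverse).zipWith (· - ·)
        (((betaM e j μ g).sort (· ≤ ·)).reverse).tail := rfl

private lemma recon : ∀ (l l' : List ℕ), l.Chain' (· ≥ ·) → l'.Chain' (· ≥ ·) →
    l.getLast? = some 0 → l'.getLast? = some 0 →
    l.zipWith (· - ·) l.tail = l'.zipWith (· - ·) l'.tail → l = l'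
  | [], _, _, _, hl, _, _ => by simp at hl
  | _ :: _, [], _, _, _, hl', _ => by simp at hl'
  | [a], [a'], _, _, hl, hl', _ => by simp_all
  | [a], a' :: b' :: t', _, _, _, _, hd => by simp at hd
  | a :: b :: t, [a'], _, _, _, _, hd => by simp at hd
  | a :: b :: t, a' :: b' :: t', hc, hc', hl, hl', hd => by
      simp only [List.tail_cons, List.zipWith_cons_cons] at hd
      obtain ⟨h1, h2⟩ := List.cons.inj hd
      have hbt : (b :: t : List ℕ) = b' :: t' :=
        recon (b :: t) (b' :: t') hc.tail hc'.tail
          (by rwa [List.getLast?_cons_cons] at hl)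
          (by rwa [List.getLast?_cons_cons] at hl') h2
      obtain ⟨hb, ht⟩ := List.cons.inj hbt
      have hab : a ≥ b := (List.isChain_cons_cons.mp hc).1
      have hab' : a' ≥ b' := (List.isChain_cons_cons.mp hc').1
      subst hb ht
      have : a = a' := by omega
      rw [this]

private lemma head_of_sorted_zero_mem (A : List ℕ) (hs : A.Pairwise (· ≤ ·))
    (h0 : 0 ∈ A) : A.head? = some 0 := by
  cases A with
  | nil => simp at h0
  | cons a t =>
    have : a ≤ 0 := by
      rcases List.mem_cons.mp h0 with h | h
      · omega
      · exact List.rel_of_pairwise_cons hs h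
    simp [Nat.le_zero.mp this]

private lemma multiset_recon (M M' : Multiset ℕ) (h0 : 0 ∈ M) (h0' : 0 ∈ M')
    (hd : ((M.sort (· ≤ ·)).reverse).zipWith (· - ·) ((M.sort (· ≤ ·)).reverse).tail
        = ((M'.sort (· ≤ ·)).reverse).zipWith (· - ·) ((M'.sort (· ≤ ·)).reverse).tail) :
    M = M' := by
  have key : ∀ N : Multiset ℕ, 0 ∈ N →
      ((N.sort (· ≤ ·)).reverse).Chain' (· ≥ ·) ∧
      ((N.sort (· ≤ ·)).reverse).getLast? = some 0 := by
    intro N h0N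
    constructor
    · have h : ((N.sort (· ≤ ·))).Pairwise (fun a b => b ≥ a) :=
        Multiset.pairwise_sort N (· ≤ ·)
      exact (List.pairwise_reverse.mpr h).isChain
    · rw [List.getLast?_reverse]
      exact head_of_sorted_zero_mem _ (Multiset.pairwise_sort N _)
        (by rw [← Multiset.mem_coe, Multiset.sort_eq]; exact h0N)
  obtain ⟨hc, hlast⟩ := key M h0
  obtain ⟨hc', hlast'⟩ := key M' h0'
  have hA : M.sort (· ≤ ·) = M'.sort (· ≤ ·) :=
    List.reverse_injective (recon _ _ hc hc' hlast hlast' hd)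
  calc M = ↑(M.sort (· ≤ ·)) := (Multiset.sort_eq _ _).symm
    _ = ↑(M'.sort (· ≤ ·)) := by rw [hA]
    _ = M' := Multiset.sort_eq _ _

private lemma sPos_lt (e j : ℕ) (g : ℕ → ℕ) (hje : j < e)
    (hg : ∑ t ∈ Finset.range j, g t = e - j) : ∀ m < j, sPos g m < e := by
  intro m hm
  have h1 : ∑ t ∈ Finset.range m, g t ≤ ∑ t ∈ Finset.range j, g t :=
    Finset.sum_le_sum_of_subset (Finset.range_subset_range.mpr hm.le)
  have h2 : sPos g m = (∑ t ∈ Finset.range m, g t) + m := by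
    rw [sPos, Finset.sum_add_distrib, Finset.sum_const, Finset.card_range,
      smul_eq_mul, mul_one]
  omega

private lemma sPos_strictMono (g : ℕ → ℕ) : StrictMono (sPos g) := by
  apply strictMono_nat_of_lt_succ
  intro n
  rw [sPos, sPos, Finset.sum_range_succ]
  omega

theorem core_gap_map_injective (e r j : ℕ) (hr : 2 ≤ r) (hre : r < e)
    (hj1 : 1 ≤ j) (hjr : j ≤ r) (μ : ℕ → ℕ)
    (hμpos : ∀ t < j, 1 ≤ μ t) (hμsum : ∑ t ∈ Finset.range j, μ t = r)
    (g g' : ℕ → ℕ)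
    (hg : ∑ t ∈ Finset.range j, g t = e - j)
    (hg' : ∑ t ∈ Finset.range j, g' t = e - j)
    (heq : coreDiffVec e j μ g = coreDiffVec e j μ g') :
    ∀ t < j, g t = g' t := by
  classical
  have hje : j < e := lt_of_le_of_lt hjr hre
  have memM : ∀ (gg : ℕ → ℕ) (x : ℕ), x ∈ betaM e j μ gg ↔
      ∃ m < j, ∃ row < μ m, row * e + sPos gg m = x := by
    intro gg x
    simp [betaM, Multiset.mem_bind, Multiset.mem_map, Multiset.mem_range]
  have hsPos0 : ∀ gg : ℕ → ℕ, sPos gg 0 = 0 := by intro gg; simp [sPos]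
  have h0mem : ∀ gg : ℕ → ℕ, (0 : ℕ) ∈ betaM e j μ gg := by
    intro gg
    exact (memM gg 0).mpr ⟨0, hj1, 0, hμpos 0 hj1, by simp [hsPos0]⟩
  have hMM' : betaM e j μ g = betaM e j μ g' := by
    apply multiset_recon _ _ (h0mem g) (h0mem g')
    rw [← coreDiffVec_eq, ← coreDiffVec_eq]
    exact heq
  -- each sPos g m equals some sPos g' m'
  have hsub : ∀ ⦃gg gg' : ℕ → ℕ⦄, betaM e j μ gg = betaM e j μ gg' →
      (∑ t ∈ Finset.range j, gg t = e - j) →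
      (∑ t ∈ Finset.range j, gg' t = e - j) →
      ∀ m < j, ∃ m' < j, sPos gg m = sPos gg' m' := by
    intro gg gg' hMeq hgg hgg' m hm
    have hx : sPos gg m ∈ betaM e j μ gg' := by
      rw [← hMeq]
      exact (memM gg _).mpr ⟨m, hm, 0, hμpos m hm, by simp⟩
    obtain ⟨m', hm', row, hrow, hx⟩ := (memM gg' _).mp hx
    refine ⟨m', hm', ?_⟩
    have hlt : sPos gg m < e := sPos_lt e j gg hje hgg m hm
    have hlt' : sPos gg' m' < e := sPos_lt e j gg' hje hgg' m' hm'
    rcases Nat.eq_zero_or_pos row with h | h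
    · subst h; simpa using hx.symm
    · have : e ≤ row * e := Nat.le_mul_of_pos_left e h
      omega
  have hfwd := fun m hm => hsub hMM' hg hg' m hm
  have hbwd := fun m hm => hsub hMM'.symm hg' hg m hm
  have himg : (Finset.range j).image (sPos g) = (Finset.range j).image (sPos g') := by
    apply Finset.Subset.antisymm
    · intro x hx
      simp only [Finset.mem_image, Finset.mem_range] at hx ⊢
      obtain ⟨m, hm, rfl⟩ := hx
      obtain ⟨m', hm', h⟩ := hfwd m hm
      exact ⟨m', hm', h.symm⟩
    · intro x hx
      simp only [Finset.mem_image, Finset.mem_range] at hx ⊢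
      obtain ⟨m, hm, rfl⟩ := hx
      obtain ⟨m', hm', h⟩ := hbwd m hm
      exact ⟨m', hm', h.symm⟩
  have hlists : (List.range j).map (sPos g) = (List.range j).map (sPos g') := by
    have hnodup : ∀ gg : ℕ → ℕ, ((List.range j).map (sPos gg)).Pairwise (· < ·) := by
      intro gg
      rw [List.pairwise_map]
      exact List.Pairwise.imp_of_mem (fun {a b} _ _ h => sPos_strictMono gg h)
        (List.pairwise_lt_range (n := j))
    have htf : ∀ gg : ℕ → ℕ, ((List.range j).map (sPos gg)).toFinset
        = (Finset.range j).image (sPos gg) := by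
      intro gg
      ext x
      simp [List.mem_toFinset, Finset.mem_image]
    have hperm : ((List.range j).map (sPos g)).Perm ((List.range j).map (sPos g')) := by
      apply List.perm_of_nodup_nodup_toFinset_eq
      · exact (hnodup g).nodup
      · exact (hnodup g').nodup
      · rw [htf g, htf g']; exact himg
    exact List.Perm.eq_of_pairwise' ((hnodup g).imp le_of_lt)
      ((hnodup g').imp le_of_lt) hperm
  have hsm : ∀ m < j, sPos g m = sPos g' m := by
    intro m hm
    exact List.map_eq_map_iff.mp hlists m (List.mem_range.mpr hm)
  have hsj : ∀ gg : ℕ → ℕ, (∑ t ∈ Finset.range j, gg t = e - j) → sPos gg j = e := by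
    intro gg hgg
    rw [sPos, Finset.sum_add_distrib, Finset.sum_const, Finset.card_range,
      smul_eq_mul, mul_one]
    omega
  have hsmj : ∀ m ≤ j, sPos g m = sPos g' m := by
    intro m hm
    rcases Nat.lt_or_ge m j with h | h
    · exact hsm m h
    · have hmj : m = j := le_antisymm hm h
      subst hmj
      rw [hsj g hg, hsj g' hg']
  intro t ht
  have h1 : sPos g (t + 1) = sPos g t + (g t + 1) := by
    rw [sPos, sPos, Finset.sum_range_succ]
  have h2 : sPos g' (t + 1) = sPos g' t + (g' t + 1) := by
    rw [sPos, sPos, Finset.sum_range_succ]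
  have e1 := hsmj t (le_of_lt ht)
  have e2 := hsmj (t + 1) ht
  omega
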